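/- The number of noncrossing set partitions of {1,...,n} with exactly k blocks equals the Narayana number Nar(n,k) = (1/n)·binom(n,k)·binom(n,k−1). -/

import Mathlib

open Finset

/-- A set partition of `[n]` is noncrossing if whenever `a < b < c < d` with `a,c` in a
block `B` and `b,d` in a block `C`, then `B = C`. -/
def Noncrossing {n : ℕ} (π : Finpartition (Finset.univ : Finset (Fin n))) : Prop :=
  ∀ B ∈ π.parts, ∀ C ∈ π.parts, ∀ a b c d : Fin n,
    a < b → b < c → c < d → a ∈ B → c ∈ B → b ∈ C → d ∈ C → B = C
namespace Nara
open Finset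
variable {n : ℕ}

/-- prefix count `≤ i` -/
def pLe (A : Finset (Fin n)) (i : Fin n) : ℤ := ((A.filter (fun a => a ≤ i)).card : ℤ)
/-- prefix count `< i` -/
def pLt (A : Finset (Fin n)) (i : Fin n) : ℤ := ((A.filter (fun a => a < i)).card : ℤ)

def Hh (S T : Finset (Fin n)) (i : Fin n) : ℤ := pLe S i - pLt T i
def hh (S T : Finset (Fin n)) (i : Fin n) : ℤ := pLe S i - pLe T i
def pp (S T : Finset (Fin n)) (i : Fin n) : ℤ := pLt S i - pLt T i

def Valid (S T : Finset (Fin n)) : Prop := ∀ i : Fin n, pLt T i < pLe S i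

def rel (S T : Finset (Fin n)) (i j : Fin n) : Prop :=
  Hh S T i = Hh S T j ∧ ∀ m : Fin n, min i j ≤ m → m < max i j → Hh S T i ≤ hh S T m

lemma pLe_eq (A : Finset (Fin n)) (i : Fin n) :
    pLe A i = pLt A i + (if i ∈ A then 1 else 0) := by
  unfold pLe pLt
  have : A.filter (fun a => a ≤ i) = A.filter (fun a => a < i) ∪ A.filter (fun a => a = i) := by
    ext a; simp only [mem_filter, mem_union]
    constructor
    · rintro ⟨ha, h⟩
      rcases lt_or_eq_of_le h with h | h
      · exact Or.inl ⟨ha, h⟩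
      · exact Or.inr ⟨ha, h⟩
    · rintro (⟨ha, h⟩ | ⟨ha, h⟩)
      · exact ⟨ha, le_of_lt h⟩
      · exact ⟨ha, le_of_eq h⟩
  rw [this, card_union_of_disjoint]
  · have : A.filter (fun a => a = i) = if i ∈ A then {i} else ∅ := by
      split_ifs with h
      · ext a; simp only [mem_filter, mem_singleton]
        exact ⟨fun ⟨_, h2⟩ => h2, fun h2 => ⟨h2 ▸ h, h2⟩⟩
      · ext a; simp only [mem_filter, notMem_empty, iff_false]
        rintro ⟨ha, rfl⟩; exact h ha
    rw [this]
    split_ifs <;> simp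
  · rw [disjoint_left]
    rintro a ha hb
    simp only [mem_filter] at ha hb
    exact absurd (hb.2 ▸ ha.2) (lt_irrefl i)

lemma pLt_succ (A : Finset (Fin n)) {m i : Fin n} (h : (m : ℕ) + 1 = (i : ℕ)) :
    pLt A i = pLe A m := by
  unfold pLt pLe
  congr 1
  apply congrArg
  apply filter_congr
  intro a _
  simp only [Fin.lt_def, Fin.le_def]
  omega

lemma pLt_bot (A : Finset (Fin n)) {i : Fin n} (h : (i : ℕ) = 0) : pLt A i = 0 := by
  unfold pLt
  have : A.filter (fun a => a < i) = ∅ := by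
    ext a; simp only [mem_filter, notMem_empty, iff_false]
    rintro ⟨_, ha⟩
    simp [Fin.lt_def, h] at ha
  simp [this]

lemma pLe_top (A : Finset (Fin n)) {i : Fin n} (h : (i : ℕ) = n - 1) :
    pLe A i = A.card := by
  unfold pLe
  congr 1
  apply congrArg
  apply filter_true_of_mem
  intro a _
  have := a.isLt
  simp only [Fin.le_def]
  omega

lemma hh_eq_pp_succ (S T : Finset (Fin n)) {m i : Fin n} (h : (m : ℕ) + 1 = (i : ℕ)) :
    hh S T m = pp S T i := by
  unfold hh pp
  rw [pLt_succ S h, pLt_succ T h]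

lemma Hh_eq_pp_add (S T : Finset (Fin n)) (i : Fin n) :
    Hh S T i = pp S T i + (if i ∈ S then 1 else 0) := by
  unfold Hh pp
  rw [pLe_eq]
  ring

lemma hh_eq_Hh_sub (S T : Finset (Fin n)) (i : Fin n) :
    hh S T i = Hh S T i - (if i ∈ T then 1 else 0) := by
  unfold hh Hh
  rw [pLe_eq T]
  ring

lemma pp_bot (S T : Finset (Fin n)) {i : Fin n} (h : (i : ℕ) = 0) : pp S T i = 0 := by
  unfold pp; rw [pLt_bot S h, pLt_bot T h]; ring

lemma hh_top (S T : Finset (Fin n)) (hc : S.card = T.card) {i : Fin n} (h : (i : ℕ) = n - 1) :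
    hh S T i = 0 := by
  unfold hh; rw [pLe_top S h, pLe_top T h, hc]; ring

section PartSide
variable (π : Finpartition (Finset.univ : Finset (Fin n)))

def mins : Finset (Fin n) := univ.filter (fun i => ∀ j ∈ π.part i, i ≤ j)
def maxs : Finset (Fin n) := univ.filter (fun i => ∀ j ∈ π.part i, j ≤ i)

lemma mem_mins {i : Fin n} : i ∈ mins π ↔ ∀ j ∈ π.part i, i ≤ j := by
  simp [mins]

lemma mem_maxs {i : Fin n} : i ∈ maxs π ↔ ∀ j ∈ π.part i, j ≤ i := by
  simp [maxs]

lemma part_mem' (i : Fin n) : π.part i ∈ π.parts := π.part_mem.2 (mem_univ i)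
lemma mem_part' (i : Fin n) : i ∈ π.part i := π.mem_part (mem_univ i)

lemma min'_mem_mins {B : Finset (Fin n)} (hB : B ∈ π.parts) (hne : B.Nonempty) :
    B.min' hne ∈ mins π := by
  rw [mem_mins]
  intro j hj
  rw [π.part_eq_of_mem hB (B.min'_mem hne)] at hj
  exact B.min'_le j hj

lemma max'_mem_maxs {B : Finset (Fin n)} (hB : B ∈ π.parts) (hne : B.Nonempty) :
    B.max' hne ∈ maxs π := by
  rw [mem_maxs]
  intro j hj
  rw [π.part_eq_of_mem hB (B.max'_mem hne)] at hj
  exact B.le_max' j hj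


/-- parts having an element `≤ i` are counted by elements of `mins` that are `≤ i`. -/
lemma card_parts_low (i : Fin n) :
    ((π.parts.filter (fun B => ∃ a ∈ B, a ≤ i)).card : ℤ) = pLe (mins π) i := by
  unfold pLe
  norm_cast
  apply Finset.card_bij (fun B hB => B.min' (π.nonempty_of_mem_parts (mem_filter.mp hB).1))
  · intro B hB
    rw [mem_filter] at hB ⊢
    obtain ⟨hB, a, haB, hai⟩ := hB
    exact ⟨min'_mem_mins π hB _, le_trans (B.min'_le a haB) hai⟩
  · intro B hB C hC h
    rw [mem_filter] at hB hC
    exact π.eq_of_mem_parts hB.1 hC.1 (h ▸ Finset.min'_mem _ _) (Finset.min'_mem _ _)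
  · intro m hm
    rw [mem_filter] at hm
    obtain ⟨hm, hmi⟩ := hm
    rw [mem_mins] at hm
    have hne : (π.part m).Nonempty := π.nonempty_of_mem_parts (part_mem' π m)
    refine ⟨π.part m, ?_, ?_⟩
    · rw [mem_filter]
      exact ⟨part_mem' π m, m, mem_part' π m, hmi⟩
    · exact le_antisymm (Finset.min'_le _ m (mem_part' π m)) (hm _ (Finset.min'_mem _ _))

lemma card_parts_closedLt (i : Fin n) :
    ((π.parts.filter (fun B => ∀ b ∈ B, b < i)).card : ℤ) = pLt (maxs π) i := by
  unfold pLt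
  norm_cast
  apply Finset.card_bij (fun B hB => B.max' (π.nonempty_of_mem_parts (mem_filter.mp hB).1))
  · intro B hB
    rw [mem_filter] at hB ⊢
    obtain ⟨hB, hball⟩ := hB
    exact ⟨max'_mem_maxs π hB _, hball _ (Finset.max'_mem _ _)⟩
  · intro B hB C hC h
    rw [mem_filter] at hB hC
    exact π.eq_of_mem_parts hB.1 hC.1 (h ▸ Finset.max'_mem _ _) (Finset.max'_mem _ _)
  · intro m hm
    rw [mem_filter] at hm
    obtain ⟨hm, hmi⟩ := hm
    rw [mem_maxs] at hm
    refine ⟨π.part m, ?_, ?_⟩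
    · rw [mem_filter]
      refine ⟨part_mem' π m, fun b hb => lt_of_le_of_lt (hm b hb) hmi⟩
    · exact le_antisymm (hm _ (Finset.max'_mem _ _)) (Finset.le_max' _ m (mem_part' π m))

lemma card_parts_closedLe (i : Fin n) :
    ((π.parts.filter (fun B => ∀ b ∈ B, b ≤ i)).card : ℤ) = pLe (maxs π) i := by
  unfold pLe
  norm_cast
  apply Finset.card_bij (fun B hB => B.max' (π.nonempty_of_mem_parts (mem_filter.mp hB).1))
  · intro B hB
    rw [mem_filter] at hB ⊢
    obtain ⟨hB, hball⟩ := hB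
    exact ⟨max'_mem_maxs π hB _, hball _ (Finset.max'_mem _ _)⟩
  · intro B hB C hC h
    rw [mem_filter] at hB hC
    exact π.eq_of_mem_parts hB.1 hC.1 (h ▸ Finset.max'_mem _ _) (Finset.max'_mem _ _)
  · intro m hm
    rw [mem_filter] at hm
    obtain ⟨hm, hmi⟩ := hm
    rw [mem_maxs] at hm
    refine ⟨π.part m, ?_, ?_⟩
    · rw [mem_filter]
      refine ⟨part_mem' π m, fun b hb => le_trans (hm b hb) hmi⟩
    · exact le_antisymm (hm _ (Finset.max'_mem _ _)) (Finset.le_max' _ m (mem_part' π m))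

def spans (i : Fin n) : Finset (Finset (Fin n)) :=
  π.parts.filter (fun B => (∃ a ∈ B, a ≤ i) ∧ (∃ b ∈ B, i ≤ b))

def ks (i : Fin n) : Finset (Finset (Fin n)) :=
  π.parts.filter (fun B => (∃ a ∈ B, a ≤ i) ∧ (∃ b ∈ B, i < b))

lemma spans_card (i : Fin n) : ((spans π i).card : ℤ) = Hh (mins π) (maxs π) i := by
  unfold Hh
  rw [← card_parts_low π i, ← card_parts_closedLt π i]
  rw [eq_sub_iff_add_eq]
  norm_cast
  rw [← card_union_of_disjoint, spans]
  · congr 1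
    ext B
    simp only [mem_union, mem_filter]
    constructor
    · rintro (⟨hB, h1, h2⟩ | ⟨hB, h⟩)
      · exact ⟨hB, h1⟩
      · refine ⟨hB, ?_⟩
        obtain ⟨b, hb⟩ := π.nonempty_of_mem_parts hB
        exact ⟨b, hb, le_of_lt (h b hb)⟩
    · rintro ⟨hB, a, haB, hai⟩
      by_cases hc : ∃ b ∈ B, i ≤ b
      · exact Or.inl ⟨hB, ⟨a, haB, hai⟩, hc⟩
      · push_neg at hc
        exact Or.inr ⟨hB, hc⟩
  · rw [disjoint_left]
    rintro B hB hB'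
    simp only [spans, mem_filter] at hB hB'
    obtain ⟨_, _, b, hbB, hib⟩ := hB
    exact absurd hib (not_le.mpr (hB'.2 b hbB))

lemma ks_card (i : Fin n) : ((ks π i).card : ℤ) = hh (mins π) (maxs π) i := by
  unfold hh
  rw [← card_parts_low π i, ← card_parts_closedLe π i]
  rw [eq_sub_iff_add_eq]
  norm_cast
  rw [← card_union_of_disjoint, ks]
  · congr 1
    ext B
    simp only [mem_union, mem_filter]
    constructor
    · rintro (⟨hB, h1, h2⟩ | ⟨hB, h⟩)
      · exact ⟨hB, h1⟩
      · refine ⟨hB, ?_⟩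
        obtain ⟨b, hb⟩ := π.nonempty_of_mem_parts hB
        exact ⟨b, hb, (h b hb)⟩
    · rintro ⟨hB, a, haB, hai⟩
      by_cases hc : ∃ b ∈ B, i < b
      · exact Or.inl ⟨hB, ⟨a, haB, hai⟩, hc⟩
      · push_neg at hc
        exact Or.inr ⟨hB, hc⟩
  · rw [disjoint_left]
    rintro B hB hB'
    simp only [ks, mem_filter] at hB hB'
    obtain ⟨_, _, b, hbB, hib⟩ := hB
    exact absurd hib (not_lt.mpr (hB'.2 b hbB))

lemma card_mins : (mins π).card = π.parts.card := by
  apply Finset.card_bij (fun i _ => π.part i)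
  · intro i hi; exact part_mem' π i
  · intro i hi j hj h
    rw [mem_mins] at hi hj
    have hij : i ∈ π.part j := h ▸ mem_part' π i
    have hji : j ∈ π.part i := h ▸ mem_part' π j
    exact le_antisymm (hi j hji) (hj i hij)
  · intro B hB
    have hne := π.nonempty_of_mem_parts hB
    exact ⟨B.min' hne, min'_mem_mins π hB hne, π.part_eq_of_mem hB (B.min'_mem hne)⟩

lemma card_maxs : (maxs π).card = π.parts.card := by
  apply Finset.card_bij (fun i _ => π.part i)
  · intro i hi; exact part_mem' π i
  · intro i hi j hj h
    rw [mem_maxs] at hi hj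
    have hij : i ∈ π.part j := h ▸ mem_part' π i
    have hji : j ∈ π.part i := h ▸ mem_part' π j
    exact le_antisymm (hj i hij) (hi j hji)
  · intro B hB
    have hne := π.nonempty_of_mem_parts hB
    exact ⟨B.max' hne, max'_mem_maxs π hB hne, π.part_eq_of_mem hB (B.max'_mem hne)⟩

lemma valid_of_partition : Valid (mins π) (maxs π) := by
  intro i
  have h1 : π.part i ∈ spans π i := by
    rw [spans, mem_filter]
    exact ⟨part_mem' π i, ⟨i, mem_part' π i, le_refl i⟩, ⟨i, mem_part' π i, le_refl i⟩⟩
  have h2 : 0 < ((spans π i).card : ℤ) := by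
    exact_mod_cast Finset.card_pos.mpr ⟨_, h1⟩
  have := spans_card π i
  unfold Hh at this
  omega

end PartSide

section NC
variable {π : Finpartition (Finset.univ : Finset (Fin n))}

lemma nest (hNC : Noncrossing π) {B C : Finset (Fin n)} (hB : B ∈ π.parts) (hC : C ∈ π.parts)
    (hne : B ≠ C) {a b p : Fin n} (ha : a ∈ B) (hb : b ∈ B) (hp : p ∈ C)
    (hap : a ≤ p) (hpb : p ≤ b) : ∀ q ∈ C, a < q ∧ q < b := by
  intro q hq
  have hap' : a < p := by
    rcases lt_or_eq_of_le hap with h | h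
    · exact h
    · exact absurd (π.eq_of_mem_parts hB hC (show p ∈ B by rw [← h]; exact ha) hp) hne
  have hpb' : p < b := by
    rcases lt_or_eq_of_le hpb with h | h
    · exact h
    · exact absurd (π.eq_of_mem_parts hB hC (show p ∈ B by rw [h]; exact hb) hp) hne
  constructor
  · by_contra hqa
    push_neg at hqa
    have hqa' : q < a := by
      rcases lt_or_eq_of_le hqa with h | h
      · exact h
      · exact absurd (π.eq_of_mem_parts hB hC (show q ∈ B by rw [h]; exact ha) hq) hne
    exact hne ((hNC C hC B hB q a p b hqa' hap' hpb' hq hp ha hb).symm)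
  · by_contra hbq
    push_neg at hbq
    have hbq' : b < q := by
      rcases lt_or_eq_of_le hbq with h | h
      · exact h
      · exact absurd (π.eq_of_mem_parts hB hC (show q ∈ B by rw [← h]; exact hb) hq) hne
    exact hne (hNC B hB C hC a p b q hap' hpb' hbq' ha hb hp hq)

/-- same part implies same spanning set -/
lemma spans_eq_of_part_eq (hNC : Noncrossing π) {i j : Fin n} (hij : i ≤ j)
    (hpart : π.part i = π.part j) : spans π i = spans π j := by
  ext B
  simp only [spans, mem_filter]
  constructor
  · rintro ⟨hB, ⟨a, haB, hai⟩, ⟨b, hbB, hib⟩⟩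
    refine ⟨hB, ?_⟩
    by_cases hBD : B = π.part i
    · have hjB : j ∈ B := hBD ▸ (hpart ▸ mem_part' π j)
      exact ⟨⟨j, hjB, le_refl j⟩, ⟨j, hjB, le_refl j⟩⟩
    · have := nest hNC hB (part_mem' π i) hBD haB hbB (mem_part' π i) hai hib
      have hj := this j (hpart ▸ mem_part' π j)
      exact ⟨⟨a, haB, le_trans hai hij⟩, ⟨b, hbB, le_of_lt hj.2⟩⟩
  · rintro ⟨hB, ⟨a, haB, hai⟩, ⟨b, hbB, hib⟩⟩
    refine ⟨hB, ?_⟩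
    by_cases hBD : B = π.part j
    · have hiB : i ∈ B := hBD ▸ (hpart ▸ mem_part' π i)
      exact ⟨⟨i, hiB, le_refl i⟩, ⟨i, hiB, le_refl i⟩⟩
    · have := nest hNC hB (part_mem' π j) hBD haB hbB (mem_part' π j) hai hib
      have hi := this i (hpart ▸ mem_part' π i)
      exact ⟨⟨a, haB, le_of_lt hi.1⟩, ⟨b, hbB, le_trans hij hib⟩⟩

lemma spans_subset_ks (hNC : Noncrossing π) {i j m : Fin n} (hij : i ≤ j)
    (hpart : π.part i = π.part j) (him : i ≤ m) (hmj : m < j) : spans π i ⊆ ks π m := by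
  intro B hB
  simp only [spans, mem_filter] at hB
  obtain ⟨hB, ⟨a, haB, hai⟩, ⟨b, hbB, hib⟩⟩ := hB
  simp only [ks, mem_filter]
  refine ⟨hB, ⟨a, haB, le_trans hai him⟩, ?_⟩
  by_cases hBD : B = π.part i
  · exact ⟨j, hBD ▸ (hpart ▸ mem_part' π j), hmj⟩
  · have := nest hNC hB (part_mem' π i) hBD haB hbB (mem_part' π i) hai hib
    have hj := this j (hpart ▸ mem_part' π j)
    exact ⟨b, hbB, lt_trans hmj hj.2⟩

/-- forward direction of the characterization -/
lemma rel_of_part_eq (hNC : Noncrossing π) {i j : Fin n} (hij : i ≤ j)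
    (hpart : π.part i = π.part j) : rel (mins π) (maxs π) i j := by
  constructor
  · rw [← spans_card, ← spans_card, spans_eq_of_part_eq hNC hij hpart]
  · intro m h1 h2
    rw [min_eq_left hij] at h1
    rw [max_eq_right hij] at h2
    rw [← spans_card, ← ks_card]
    exact_mod_cast Finset.card_le_card (spans_subset_ks hNC hij hpart h1 h2)

/-- backward: part of `i` has an element `≥ j` -/
lemma exists_ge_of_rel (hNC : Noncrossing π) {i j : Fin n} (hij : i < j)
    (hrel : rel (mins π) (maxs π) i j) : ∃ x ∈ π.part i, j ≤ x := by
  by_contra hcon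
  push_neg at hcon
  -- let c be the max of part i; i ≤ c < j
  have hne : (π.part i).Nonempty := π.nonempty_of_mem_parts (part_mem' π i)
  set c := (π.part i).max' hne with hc
  have hic : i ≤ c := Finset.le_max' _ i (mem_part' π i)
  have hcj : c < j := hcon c (Finset.max'_mem _ _)
  -- all B ∈ ks π c are in spans π i and differ from part i
  have hsub : ks π c ⊆ spans π i := by
    intro B hB
    simp only [ks, mem_filter] at hB
    obtain ⟨hB, ⟨a, haB, hac⟩, ⟨b, hbB, hcb⟩⟩ := hB
    have hBD : B ≠ π.part i := by
      rintro rfl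
      exact absurd (Finset.le_max' _ b hbB) (not_le.mpr hcb)
    have := nest hNC hB (part_mem' π i) hBD haB hbB (Finset.max'_mem _ hne) hac (le_of_lt hcb)
    have hi := this i (mem_part' π i)
    simp only [spans, mem_filter]
    exact ⟨hB, ⟨a, haB, le_of_lt hi.1⟩, ⟨b, hbB, le_of_lt hi.2⟩⟩
  have hnotmem : π.part i ∉ ks π c := by
    simp only [ks, mem_filter]
    rintro ⟨-, -, ⟨b, hbB, hcb⟩⟩
    exact absurd (Finset.le_max' _ b hbB) (not_le.mpr hcb)
  have hcard : (ks π c).card + 1 ≤ (spans π i).card := by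
    have : insert (π.part i) (ks π c) ⊆ spans π i := by
      rw [Finset.insert_subset_iff]
      refine ⟨?_, hsub⟩
      simp only [spans, mem_filter]
      exact ⟨part_mem' π i, ⟨i, mem_part' π i, le_refl i⟩, ⟨i, mem_part' π i, le_refl i⟩⟩
    calc (ks π c).card + 1 = (insert (π.part i) (ks π c)).card := (Finset.card_insert_of_notMem hnotmem).symm
    _ ≤ _ := Finset.card_le_card this
  have h1 := hrel.2 c (by rw [min_eq_left (le_of_lt hij)]; exact hic)
      (by rw [max_eq_right (le_of_lt hij)]; exact hcj)
  rw [← spans_card, ← ks_card] at h1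
  omega

lemma exists_le_of_rel (hNC : Noncrossing π) {i j : Fin n} (hij : i < j)
    (hrel : rel (mins π) (maxs π) i j) : ∃ x ∈ π.part j, x ≤ i := by
  by_contra hcon
  push_neg at hcon
  have hne : (π.part j).Nonempty := π.nonempty_of_mem_parts (part_mem' π j)
  set e := (π.part j).min' hne with he
  have hej : e ≤ j := Finset.min'_le _ j (mem_part' π j)
  have hie : i < e := hcon e (Finset.min'_mem _ _)
  -- m := e - 1
  have hepos : 0 < (e : ℕ) := lt_of_le_of_lt (Nat.zero_le i) hie
  set m : Fin n := ⟨(e : ℕ) - 1, lt_trans (by omega) e.isLt⟩ with hm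
  have hm1 : (m : ℕ) + 1 = (e : ℕ) := by simp [hm]; omega
  have him : i ≤ m := by
    rw [Fin.le_def]; simp [hm]
    have := hie; rw [Fin.lt_def] at this; omega
  have hmj : m < j := by
    rw [Fin.lt_def]; simp [hm]
    have := hej; rw [Fin.le_def] at this; omega
  -- ks π m ⊆ spans π j \ {part j}
  have hsub : ks π m ⊆ spans π j := by
    intro B hB
    simp only [ks, mem_filter] at hB
    obtain ⟨hB, ⟨a, haB, ham⟩, ⟨b, hbB, hmb⟩⟩ := hB
    have hae : a < e := by
      rw [Fin.lt_def]; rw [Fin.le_def] at ham; omega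
    have heb : e ≤ b := by
      rw [Fin.le_def]; rw [Fin.lt_def] at hmb; omega
    have hBD : B ≠ π.part j := by
      rintro rfl
      exact absurd (Finset.min'_le _ a haB) (not_le.mpr hae)
    have := nest hNC hB (part_mem' π j) hBD haB hbB (Finset.min'_mem _ hne) (le_of_lt hae) heb
    have hj := this j (mem_part' π j)
    simp only [spans, mem_filter]
    exact ⟨hB, ⟨a, haB, le_of_lt hj.1⟩, ⟨b, hbB, le_of_lt hj.2⟩⟩
  have hnotmem : π.part j ∉ ks π m := by
    simp only [ks, mem_filter]
    rintro ⟨-, ⟨a, haB, ham⟩, -⟩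
    have : e ≤ a := Finset.min'_le _ a haB
    rw [Fin.le_def] at this ham
    omega
  have hcard : (ks π m).card + 1 ≤ (spans π j).card := by
    have : insert (π.part j) (ks π m) ⊆ spans π j := by
      rw [Finset.insert_subset_iff]
      refine ⟨?_, hsub⟩
      simp only [spans, mem_filter]
      exact ⟨part_mem' π j, ⟨j, mem_part' π j, le_refl j⟩, ⟨j, mem_part' π j, le_refl j⟩⟩
    calc (ks π m).card + 1 = (insert (π.part j) (ks π m)).card := (Finset.card_insert_of_notMem hnotmem).symm
    _ ≤ _ := Finset.card_le_card this
  have h1 := hrel.2 m (by rw [min_eq_left (le_of_lt hij)]; exact him)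
      (by rw [max_eq_right (le_of_lt hij)]; exact hmj)
  rw [hrel.1] at h1
  rw [← spans_card, ← ks_card] at h1
  omega

lemma part_eq_of_rel (hNC : Noncrossing π) {i j : Fin n} (hij : i ≤ j)
    (hrel : rel (mins π) (maxs π) i j) : π.part i = π.part j := by
  rcases lt_or_eq_of_le hij with hij | rfl
  · obtain ⟨x, hxD, hjx⟩ := exists_ge_of_rel hNC hij hrel
    obtain ⟨y, hyE, hyi⟩ := exists_le_of_rel hNC hij hrel
    by_contra hne
    have := nest hNC (part_mem' π i) (part_mem' π j) hne (mem_part' π i) hxD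
        (mem_part' π j) (le_of_lt hij) hjx
    have := (this y hyE).1
    rw [Fin.lt_def] at this; rw [Fin.le_def] at hyi
    omega
  · rfl

/-- Noncrossing partitions are determined by mins and maxs. -/
lemma nc_ext {π' : Finpartition (Finset.univ : Finset (Fin n))}
    (hNC : Noncrossing π) (hNC' : Noncrossing π')
    (hmins : mins π = mins π') (hmaxs : maxs π = maxs π') : π = π' := by
  have key : ∀ i j : Fin n, π.part i = π.part j ↔ π'.part i = π'.part j := by
    have main : ∀ i j : Fin n, i ≤ j → (π.part i = π.part j ↔ π'.part i = π'.part j) := by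
      intro i j hij
      constructor
      · intro h
        apply part_eq_of_rel hNC' hij
        rw [← hmins, ← hmaxs]
        exact rel_of_part_eq hNC hij h
      · intro h
        apply part_eq_of_rel hNC hij
        rw [hmins, hmaxs]
        exact rel_of_part_eq hNC' hij h
    intro i j
    rcases le_total i j with h | h
    · exact main i j h
    · rw [eq_comm, eq_comm (a := π'.part i)]
      exact main j i h
  ext B
  constructor
  · intro hB
    obtain ⟨b, hb⟩ := π.nonempty_of_mem_parts hB
    have : B = π'.part b := by
      ext x
      rw [← π.part_eq_of_mem hB hb]
      rw [π.mem_part_iff_part_eq_part (mem_univ x) (mem_univ b)]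
      rw [π'.mem_part_iff_part_eq_part (mem_univ x) (mem_univ b)]
      exact key x b
    exact this ▸ part_mem' π' b
  · intro hB
    obtain ⟨b, hb⟩ := π'.nonempty_of_mem_parts hB
    have : B = π.part b := by
      ext x
      rw [← π'.part_eq_of_mem hB hb]
      rw [π'.mem_part_iff_part_eq_part (mem_univ x) (mem_univ b)]
      rw [π.mem_part_iff_part_eq_part (mem_univ x) (mem_univ b)]
      exact (key x b).symm
    exact this ▸ part_mem' π b

end NC

section Construct
variable (S T : Finset (Fin n))

lemma pp_succ {m i : Fin n} (h : (m : ℕ) + 1 = (i : ℕ)) :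
    pp S T i = pp S T m + (if m ∈ S then 1 else 0) - (if m ∈ T then 1 else 0) := by
  unfold pp
  rw [pLt_succ S h, pLt_succ T h, pLe_eq S, pLe_eq T]
  ring

lemma rel_refl (i : Fin n) : rel S T i i :=
  ⟨rfl, fun m h1 h2 => absurd (lt_of_le_of_lt h1 h2) (by simp)⟩

lemma rel_symm {i j : Fin n} (h : rel S T i j) : rel S T j i := by
  refine ⟨h.1.symm, fun m h1 h2 => ?_⟩
  rw [min_comm] at h1
  rw [max_comm] at h2
  rw [← h.1]
  exact h.2 m h1 h2

lemma rel_trans {i j k : Fin n} (h1 : rel S T i j) (h2 : rel S T j k) : rel S T i k := by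
  refine ⟨h1.1.trans h2.1, fun m hm1 hm2 => ?_⟩
  by_cases hc : min i j ≤ m ∧ m < max i j
  · exact h1.2 m hc.1 hc.2
  · rw [not_and_or] at hc
    push_neg at hc
    have key : min j k ≤ m ∧ m < max j k := by
      rcases hc with hc | hc
      · -- m < min i j : then m < i and m < j, so k ≤ m from hm1
        have hmi : m < i := lt_of_lt_of_le hc (min_le_left i j)
        have hmj : m < j := lt_of_lt_of_le hc (min_le_right i j)
        have hkm : k ≤ m := by
          rcases min_le_iff.mp hm1 with h | h
          · exact absurd hmi (not_lt.mpr h)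
          · exact h
        exact ⟨le_trans (min_le_right j k) hkm, lt_of_lt_of_le hmj (le_max_left j k)⟩
      · -- max i j ≤ m : i ≤ m, j ≤ m, so m < k from hm2
        have him : i ≤ m := le_trans (le_max_left i j) hc
        have hjm : j ≤ m := le_trans (le_max_right i j) hc
        have hmk : m < k := by
          rcases lt_max_iff.mp hm2 with h | h
          · exact absurd him (not_le.mpr h)
          · exact h
        exact ⟨le_trans (min_le_left j k) hjm, lt_of_lt_of_le hmk (le_max_right j k)⟩
    rw [h1.1]
    exact h2.2 m key.1 key.2

def relSetoid : Setoid (Fin n) := ⟨rel S T, ⟨rel_refl S T, rel_symm S T, rel_trans S T⟩⟩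

open scoped Classical in
noncomputable def mkPart : Finpartition (Finset.univ : Finset (Fin n)) :=
  Finpartition.ofSetoid (relSetoid S T)

lemma mem_part_mk {i j : Fin n} : j ∈ (mkPart S T).part i ↔ rel S T i j := by
  classical
  rw [mkPart]
  exact Finpartition.mem_part_ofSetoid_iff_rel

variable {S T}
variable (hv : Valid S T) (hc : S.card = T.card)

include hv in
lemma Hh_pos (i : Fin n) : 1 ≤ Hh S T i := by
  have := hv i; unfold Hh; omega

include hv in
lemma mins_mk : mins (mkPart S T) = S := by
  ext i
  rw [mem_mins]
  constructor
  · -- if i is the min of its class then i ∈ S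
    intro hmin
    by_contra hiS
    -- find j < i with rel S T i j
    have hn0 : 0 < n := i.pos
    set L := Hh S T i with hL
    have hL1 : 1 ≤ L := Hh_pos hv i
    have hAne : (univ.filter (fun m => m ≤ i ∧ pp S T m < L)).Nonempty := by
      refine ⟨⟨0, hn0⟩, ?_⟩
      rw [mem_filter]
      refine ⟨mem_univ _, ?_, ?_⟩
      · rw [Fin.le_def]; simp
      · rw [pp_bot S T (by simp)]; omega
    obtain ⟨j, hjA, hjmax⟩ : ∃ j ∈ (univ.filter (fun m => m ≤ i ∧ pp S T m < L)),
        ∀ m ∈ (univ.filter (fun m => m ≤ i ∧ pp S T m < L)), m ≤ j :=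
      ⟨_, Finset.max'_mem _ hAne, fun m hm => Finset.le_max' _ m hm⟩
    rw [mem_filter] at hjA
    obtain ⟨-, hji, hpj⟩ := hjA
    have hmaxj : ∀ m : Fin n, m ≤ i → j < m → L ≤ pp S T m := by
      intro m hmi hjm
      by_contra hcon
      push_neg at hcon
      have : m ∈ (univ.filter (fun m => m ≤ i ∧ pp S T m < L)) := by
        rw [mem_filter]; exact ⟨mem_univ _, hmi, hcon⟩
      exact absurd (hjmax m this) (not_le.mpr hjm)
    have hji' : j < i := by
      rcases lt_or_eq_of_le hji with h | h
      · exact h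
      · exfalso
        rw [h] at hpj
        rw [Hh_eq_pp_add, if_neg hiS, add_zero] at hL
        omega
    -- succ j
    have hjs : (j : ℕ) + 1 < n := lt_of_le_of_lt (by rw [Fin.lt_def] at hji'; omega) i.isLt
    set js : Fin n := ⟨(j : ℕ) + 1, hjs⟩ with hjsdef
    have hjsi : js ≤ i := by rw [Fin.le_def]; rw [Fin.lt_def] at hji'; simp [hjsdef]; omega
    have hjjs : j < js := by rw [Fin.lt_def]; simp [hjsdef]
    have hppjs : L ≤ pp S T js := hmaxj js hjsi hjjs
    have hsucc := pp_succ S T (show (j : ℕ) + 1 = (js : ℕ) by simp [hjsdef])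
    have hHj : Hh S T j = L := by
      rw [Hh_eq_pp_add]
      split_ifs at hsucc ⊢ <;> omega
    have hrel : rel S T j i := by
      refine ⟨by rw [hHj], fun m h1 h2 => ?_⟩
      rw [min_eq_left (le_of_lt hji')] at h1
      rw [max_eq_right (le_of_lt hji')] at h2
      have hms : (m : ℕ) + 1 < n := lt_of_le_of_lt (by rw [Fin.lt_def] at h2; omega) i.isLt
      set ms : Fin n := ⟨(m : ℕ) + 1, hms⟩ with hmsdef
      have : L ≤ pp S T ms := by
        apply hmaxj ms
        · rw [Fin.le_def]; rw [Fin.lt_def] at h2; simp [hmsdef]; omega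
        · rw [Fin.lt_def]; rw [Fin.le_def] at h1; simp [hmsdef]; omega
      rw [hh_eq_pp_succ S T (show (m : ℕ) + 1 = (ms : ℕ) by simp [hmsdef]), hHj]
      exact this
    have : j ∈ (mkPart S T).part i := (mem_part_mk S T).mpr (rel_symm S T hrel)
    exact absurd (hmin j this) (not_le.mpr hji')
  · -- if i ∈ S then i is the min of its class
    intro hiS j hj
    rw [mem_part_mk] at hj
    by_contra hij
    push_neg at hij
    -- hij : j < i
    have hpos : 0 < (i : ℕ) := by rw [Fin.lt_def] at hij; omega
    set mp : Fin n := ⟨(i : ℕ) - 1, by have := i.isLt; omega⟩ with hmp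
    have h1 : min i j ≤ mp := by
      rw [min_eq_right (le_of_lt hij), Fin.le_def]
      rw [Fin.lt_def] at hij
      simp [hmp]; omega
    have h2 : mp < max i j := by
      rw [max_eq_left (le_of_lt hij), Fin.lt_def]
      simp [hmp]; omega
    have h3 := hj.2 mp h1 h2
    rw [hh_eq_pp_succ S T (show (mp : ℕ) + 1 = (i : ℕ) by simp [hmp]; omega)] at h3
    rw [Hh_eq_pp_add, if_pos hiS] at h3
    omega

include hv hc in
lemma maxs_mk : maxs (mkPart S T) = T := by
  ext i
  rw [mem_maxs]
  constructor
  · -- if i is the max of its class then i ∈ T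
    intro hmax
    by_contra hiT
    set L := Hh S T i with hL
    have hL1 : 1 ≤ L := Hh_pos hv i
    have hn0 : 0 < n := i.pos
    have hBne : (univ.filter (fun m => i ≤ m ∧ hh S T m < L)).Nonempty := by
      refine ⟨⟨n - 1, by omega⟩, ?_⟩
      rw [mem_filter]
      refine ⟨mem_univ _, ?_, ?_⟩
      · rw [Fin.le_def]; have := i.isLt; simp; omega
      · rw [hh_top S T hc (by simp)]; omega
    obtain ⟨j, hjB, hjmin⟩ : ∃ j ∈ (univ.filter (fun m => i ≤ m ∧ hh S T m < L)),
        ∀ m ∈ (univ.filter (fun m => i ≤ m ∧ hh S T m < L)), j ≤ m :=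
      ⟨_, Finset.min'_mem _ hBne, fun m hm => Finset.min'_le _ m hm⟩
    rw [mem_filter] at hjB
    obtain ⟨-, hij, hhj⟩ := hjB
    have hminj : ∀ m : Fin n, i ≤ m → m < j → L ≤ hh S T m := by
      intro m him hmj
      by_contra hcon
      push_neg at hcon
      have : m ∈ (univ.filter (fun m => i ≤ m ∧ hh S T m < L)) := by
        rw [mem_filter]; exact ⟨mem_univ _, him, hcon⟩
      exact absurd (hjmin m this) (not_le.mpr hmj)
    have hij' : i < j := by
      rcases lt_or_eq_of_le hij with h | h
      · exact h
      · exfalso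
        rw [← h] at hhj
        rw [hh_eq_Hh_sub, if_neg hiT, sub_zero] at hhj
        omega
    have hrel : rel S T i j := by
      constructor
      · -- Hh j = L
        have hub : Hh S T j ≤ L := by
          have := hh_eq_Hh_sub S T j
          split_ifs at this <;> omega
        have hpos : 0 < (j : ℕ) := by rw [Fin.lt_def] at hij'; omega
        set mp : Fin n := ⟨(j : ℕ) - 1, by have := j.isLt; omega⟩ with hmp
        have hlb : L ≤ hh S T mp := by
          apply hminj mp
          · rw [Fin.le_def]; rw [Fin.lt_def] at hij'; simp [hmp]; omega
          · rw [Fin.lt_def]; simp [hmp]; omega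
        rw [hh_eq_pp_succ S T (show (mp : ℕ) + 1 = (j : ℕ) by simp [hmp]; omega)] at hlb
        have := Hh_eq_pp_add S T j
        split_ifs at this <;> omega
      · intro m h1 h2
        rw [min_eq_left (le_of_lt hij')] at h1
        rw [max_eq_right (le_of_lt hij')] at h2
        exact hminj m h1 h2
    have : j ∈ (mkPart S T).part i := (mem_part_mk S T).mpr hrel
    exact absurd (hmax j this) (not_le.mpr hij')
  · -- if i ∈ T then i is the max of its class
    intro hiT j hj
    rw [mem_part_mk] at hj
    by_contra hij
    push_neg at hij
    have h3 := hj.2 i (by rw [min_eq_left (le_of_lt hij)]) (by rw [max_eq_right (le_of_lt hij)]; exact hij)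
    rw [hh_eq_Hh_sub, if_pos hiT] at h3
    omega

lemma nc_mk : Noncrossing (mkPart S T) := by
  intro B hB C hC a b c d hab hbc hcd haB hcB hbC hdC
  have hBa : B = (mkPart S T).part a := (Finpartition.part_eq_of_mem _ hB haB).symm
  have hCb : C = (mkPart S T).part b := (Finpartition.part_eq_of_mem _ hC hbC).symm
  have hac : rel S T a c := (mem_part_mk S T).mp (hBa ▸ hcB)
  have hbd : rel S T b d := (mem_part_mk S T).mp (hCb ▸ hdC)
  -- Hh b = Hh a
  have hbpos : 0 < (b : ℕ) := by rw [Fin.lt_def] at hab; omega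
  set pb : Fin n := ⟨(b : ℕ) - 1, by have := b.isLt; omega⟩ with hpb
  have h1 : Hh S T a ≤ hh S T pb := by
    apply hac.2 pb
    · rw [min_eq_left (le_of_lt (lt_trans hab hbc)), Fin.le_def]
      rw [Fin.lt_def] at hab; simp [hpb]; omega
    · rw [max_eq_right (le_of_lt (lt_trans hab hbc)), Fin.lt_def]
      rw [Fin.lt_def] at hbc; simp [hpb]; omega
  rw [hh_eq_pp_succ S T (show (pb : ℕ) + 1 = (b : ℕ) by simp [hpb]; omega)] at h1
  have h1' : Hh S T a ≤ Hh S T b := by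
    have := Hh_eq_pp_add S T b; split_ifs at this <;> omega
  have hcpos : 0 < (c : ℕ) := by rw [Fin.lt_def] at hbc; omega
  set pc : Fin n := ⟨(c : ℕ) - 1, by have := c.isLt; omega⟩ with hpc
  have h2 : Hh S T b ≤ hh S T pc := by
    apply hbd.2 pc
    · rw [min_eq_left (le_of_lt (lt_trans hbc hcd)), Fin.le_def]
      rw [Fin.lt_def] at hbc; simp [hpc]; omega
    · rw [max_eq_right (le_of_lt (lt_trans hbc hcd)), Fin.lt_def]
      rw [Fin.lt_def] at hcd; simp [hpc]; omega
  rw [hh_eq_pp_succ S T (show (pc : ℕ) + 1 = (c : ℕ) by simp [hpc]; omega)] at h2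
  have h2' : Hh S T b ≤ Hh S T c := by
    have := Hh_eq_pp_add S T c; split_ifs at this <;> omega
  have hHbc : Hh S T b = Hh S T c := by
    have := hac.1; omega
  -- rel b c
  have hrel : rel S T b c := by
    refine ⟨hHbc, fun m hm1 hm2 => ?_⟩
    rw [min_eq_left (le_of_lt hbc)] at hm1
    rw [max_eq_right (le_of_lt hbc)] at hm2
    have := hac.2 m (by rw [min_eq_left (le_of_lt (lt_trans hab hbc))]; exact le_trans (le_of_lt hab) hm1)
      (by rw [max_eq_right (le_of_lt (lt_trans hab hbc))]; exact hm2)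
    have h3 := hac.1
    omega
  have : c ∈ (mkPart S T).part b := (mem_part_mk S T).mpr hrel
  have hCc : C = (mkPart S T).part c := by
    rw [hCb]
    exact ((mkPart S T).mem_part_iff_part_eq_part (mem_univ c) (mem_univ b)).mp this |>.symm
  have hBc : B = (mkPart S T).part c := by
    rw [hBa]
    have : c ∈ (mkPart S T).part a := (mem_part_mk S T).mpr hac
    exact ((mkPart S T).mem_part_iff_part_eq_part (mem_univ c) (mem_univ a)).mp this |>.symm
  rw [hBc, hCc]

include hv in
lemma card_parts_mk : (mkPart S T).parts.card = S.card := by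
  rw [← card_mins, mins_mk hv]

end Construct

section Count
open scoped Classical

noncomputable def NCset (n k : ℕ) : Finset (Finpartition (Finset.univ : Finset (Fin n))) :=
  univ.filter (fun π => Noncrossing π ∧ π.parts.card = k)

noncomputable def VFin (n k : ℕ) : Finset (Finset (Fin n) × Finset (Fin n)) :=
  ((univ.powersetCard k) ×ˢ (univ.powersetCard k)).filter (fun p => Valid p.1 p.2)

lemma mem_VFin {k : ℕ} {p : Finset (Fin n) × Finset (Fin n)} :
    p ∈ VFin n k ↔ p.1.card = k ∧ p.2.card = k ∧ Valid p.1 p.2 := by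
  simp only [VFin, mem_filter, mem_product, mem_powersetCard_univ]
  tauto

lemma card_NCset (n k : ℕ) : (NCset n k).card = (VFin n k).card := by
  apply Finset.card_bij (fun π _ => (mins π, maxs π))
  · intro π hπ
    simp only [NCset, mem_filter, mem_univ, true_and] at hπ
    rw [mem_VFin]
    exact ⟨by rw [card_mins, hπ.2], by rw [card_maxs, hπ.2], valid_of_partition π⟩
  · intro π hπ π' hπ' h
    simp only [NCset, mem_filter, mem_univ, true_and] at hπ hπ'
    exact nc_ext hπ.1 hπ'.1 (congrArg Prod.fst h) (congrArg Prod.snd h)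
  · rintro ⟨S, T⟩ hST
    rw [mem_VFin] at hST
    obtain ⟨hS, hT, hv⟩ := hST
    have hc : S.card = T.card := by rw [hS, hT]
    refine ⟨mkPart S T, ?_, ?_⟩
    · simp only [NCset, mem_filter, mem_univ, true_and]
      exact ⟨nc_mk, by rw [card_parts_mk hv, hS]⟩
    · simp only [mins_mk hv, maxs_mk hv hc]

lemma natCard_eq (n k : ℕ) :
    Nat.card {π : Finpartition (Finset.univ : Finset (Fin n)) //
      Noncrossing π ∧ π.parts.card = k} = (VFin n k).card := by
  rw [Nat.card_eq_fintype_card, Fintype.card_subtype, ← card_NCset]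
  rfl

end Count

section Transfer
open scoped Classical

noncomputable def VNat (n k : ℕ) : Finset (Finset ℕ × Finset ℕ) :=
  (((Icc 1 n).powersetCard k) ×ˢ ((Icc 1 n).powersetCard k)).filter
    (fun p => ∀ i ∈ Icc 1 n, (p.2.filter (· < i)).card < (p.1.filter (· ≤ i)).card)

def fe (n : ℕ) : Fin n ↪ ℕ := ⟨fun a => (a : ℕ) + 1, fun a b h => Fin.ext (by simpa using h)⟩

lemma fe_map_subset (A : Finset (Fin n)) : A.map (fe n) ⊆ Icc 1 n := by
  intro m hm
  rw [mem_map] at hm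
  obtain ⟨a, _, rfl⟩ := hm
  simp only [fe, Function.Embedding.coeFn_mk, DFunLike.coe, mem_Icc]
  have := a.isLt
  omega

lemma fe_filter_le (A : Finset (Fin n)) {i : Fin n} {m : ℕ} (h : (i : ℕ) + 1 = m) :
    ((A.map (fe n)).filter (· ≤ m)).card = (A.filter (· ≤ i)).card := by
  rw [Finset.filter_map, Finset.card_map]
  congr 1
  apply filter_congr
  intro a _
  simp only [Function.comp, fe, Function.Embedding.coeFn_mk, DFunLike.coe, Fin.le_def]
  omega

lemma fe_filter_lt (A : Finset (Fin n)) {i : Fin n} {m : ℕ} (h : (i : ℕ) + 1 = m) :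
    ((A.map (fe n)).filter (· < m)).card = (A.filter (· < i)).card := by
  rw [Finset.filter_map, Finset.card_map]
  congr 1
  apply filter_congr
  intro a _
  simp only [Function.comp, fe, Function.Embedding.coeFn_mk, DFunLike.coe, Fin.lt_def]
  omega

lemma card_VFin_eq_VNat (n k : ℕ) : (VFin n k).card = (VNat n k).card := by
  apply Finset.card_bij (fun p _ => (p.1.map (fe n), p.2.map (fe n)))
  · rintro ⟨S, T⟩ hp
    rw [mem_VFin] at hp
    obtain ⟨hS, hT, hv⟩ := hp
    simp only [VNat, mem_filter, mem_product, mem_powersetCard]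
    refine ⟨⟨⟨fe_map_subset S, by rw [Finset.card_map]; exact hS⟩,
      ⟨fe_map_subset T, by rw [Finset.card_map]; exact hT⟩⟩, ?_⟩
    intro m hm
    rw [mem_Icc] at hm
    have hi : m - 1 < n := by omega
    have h1 : ((⟨m - 1, hi⟩ : Fin n) : ℕ) + 1 = m := by simp; omega
    rw [fe_filter_le S h1, fe_filter_lt T h1]
    unfold Valid pLt pLe at hv
    exact_mod_cast hv ⟨m - 1, hi⟩
  · rintro ⟨S, T⟩ _ ⟨S', T'⟩ _ h
    simp only [Prod.mk.injEq] at h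
    have h1 := Finset.map_injective (fe n) h.1
    have h2 := Finset.map_injective (fe n) h.2
    rw [Prod.ext_iff]
    exact ⟨h1, h2⟩
  · rintro ⟨S', T'⟩ hp
    simp only [VNat, mem_filter, mem_product, mem_powersetCard] at hp
    obtain ⟨⟨⟨hS'sub, hS'⟩, ⟨hT'sub, hT'⟩⟩, hcond⟩ := hp
    have key : ∀ (A : Finset ℕ), A ⊆ Icc 1 n →
        (univ.filter (fun a : Fin n => (a : ℕ) + 1 ∈ A)).map (fe n) = A := by
      intro A hA
      ext m
      rw [mem_map]
      constructor
      · rintro ⟨a, ha, rfl⟩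
        rw [mem_filter] at ha
        exact ha.2
      · intro hm
        have hmIcc := hA hm
        rw [mem_Icc] at hmIcc
        refine ⟨⟨m - 1, by omega⟩, ?_, ?_⟩
        · rw [mem_filter]
          refine ⟨mem_univ _, ?_⟩
          show m - 1 + 1 ∈ A
          rwa [Nat.sub_add_cancel (by omega : 1 ≤ m)]
        · simp [fe, DFunLike.coe]; omega
      
    refine ⟨(univ.filter (fun a : Fin n => (a : ℕ) + 1 ∈ S'),
             univ.filter (fun a : Fin n => (a : ℕ) + 1 ∈ T')), ?_, ?_⟩
    · rw [mem_VFin]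
      have e1 := key S' hS'sub
      have e2 := key T' hT'sub
      refine ⟨?_, ?_, ?_⟩
      · rw [← e1, Finset.card_map] at hS'; exact hS'
      · rw [← e2, Finset.card_map] at hT'; exact hT'
      · intro i
        have hm : (i : ℕ) + 1 ∈ Icc 1 n := by
          rw [mem_Icc]; have := i.isLt; omega
        have := hcond ((i : ℕ) + 1) hm
        rw [← e1, ← e2] at this
        rw [fe_filter_le _ (rfl : (i : ℕ) + 1 = (i : ℕ) + 1)] at this
        rw [fe_filter_lt _ (rfl : (i : ℕ) + 1 = (i : ℕ) + 1)] at this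
        show pLt _ i < pLe _ i
        unfold pLt pLe
        exact_mod_cast this
    · simp only [key S' hS'sub, key T' hT'sub]

end Transfer

section Reflect
open scoped Classical

lemma cardLe_mono (A : Finset ℕ) {i j : ℕ} (h : i ≤ j) :
    (A.filter (· ≤ i)).card ≤ (A.filter (· ≤ j)).card := by
  apply card_le_card
  intro a ha
  rw [mem_filter] at ha ⊢
  exact ⟨ha.1, by omega⟩

lemma cardLe_succ (A : Finset ℕ) (i : ℕ) :
    (A.filter (· ≤ i + 1)).card ≤ (A.filter (· ≤ i)).card + 1 := by
  have hsub : A.filter (· ≤ i + 1) ⊆ insert (i + 1) (A.filter (· ≤ i)) := by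
    intro a ha
    rw [mem_filter] at ha
    rw [mem_insert, mem_filter]
    rcases Nat.lt_or_ge a (i + 1) with h | h
    · exact Or.inr ⟨ha.1, by omega⟩
    · exact Or.inl (by omega)
  calc (A.filter (· ≤ i + 1)).card ≤ (insert (i + 1) (A.filter (· ≤ i))).card :=
        card_le_card hsub
    _ ≤ (A.filter (· ≤ i)).card + 1 := card_insert_le _ _

lemma above_of_noTouch {X Y : Finset ℕ} {N : ℕ} (hY : ∀ a ∈ Y, 2 ≤ a)
    (hnt : ∀ i ∈ Icc 1 N, (Y.filter (· ≤ i)).card ≠ (X.filter (· ≤ i)).card) :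
    ∀ i, 1 ≤ i → i ≤ N → (Y.filter (· ≤ i)).card < (X.filter (· ≤ i)).card := by
  intro i
  induction i with
  | zero => omega
  | succ m ih =>
    intro _ hmN
    rcases Nat.eq_zero_or_pos m with rfl | hm
    · -- i = 1
      have hY1 : Y.filter (· ≤ 1) = ∅ := by
        rw [filter_eq_empty_iff]
        intro a ha
        have := hY a ha
        omega
      have := hnt 1 (by rw [mem_Icc]; omega)
      show (Y.filter (· ≤ 1)).card < (X.filter (· ≤ 1)).card
      rw [hY1] at this ⊢
      simp only [card_empty] at this ⊢
      omega
    · have h1 := ih hm (by omega)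
      have h2 := cardLe_succ Y m
      have h3 := cardLe_mono X (show m ≤ m + 1 by omega)
      have h4 := hnt (m + 1) (by rw [mem_Icc]; omega)
      omega

def swapP (i : ℕ) (p : Finset ℕ × Finset ℕ) : Finset ℕ × Finset ℕ :=
  (p.1.filter (· ≤ i) ∪ p.2.filter (fun a => i < a),
   p.2.filter (· ≤ i) ∪ p.1.filter (fun a => i < a))

noncomputable def touchIdx (N : ℕ) (p : Finset ℕ × Finset ℕ) : Finset ℕ :=
  (Icc 1 N).filter (fun i => (p.2.filter (· ≤ i)).card = (p.1.filter (· ≤ i)).card)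

lemma filter_le_union_gt (A : Finset ℕ) (i : ℕ) :
    A.filter (· ≤ i) ∪ A.filter (fun a => i < a) = A := by
  ext a
  simp only [mem_union, mem_filter]
  constructor
  · rintro (⟨h, -⟩ | ⟨h, -⟩) <;> exact h
  · intro h
    rcases le_or_gt a i with hle | hlt
    · exact Or.inl ⟨h, hle⟩
    · exact Or.inr ⟨h, hlt⟩

lemma card_filter_le_add_gt (A : Finset ℕ) (i : ℕ) :
    (A.filter (· ≤ i)).card + (A.filter (fun a => i < a)).card = A.card := by
  rw [← card_union_of_disjoint, filter_le_union_gt]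
  rw [disjoint_left]
  intro a ha hb
  rw [mem_filter] at ha hb
  omega

lemma swap_filter_le {p : Finset ℕ × Finset ℕ} {i j : ℕ} (h : j ≤ i) :
    (swapP i p).1.filter (· ≤ j) = p.1.filter (· ≤ j) ∧
    (swapP i p).2.filter (· ≤ j) = p.2.filter (· ≤ j) := by
  constructor <;>
  · simp only [swapP, filter_union, filter_filter]
    rw [show ∀ (A : Finset ℕ), A.filter (fun a => (a ≤ i) ∧ a ≤ j) = A.filter (· ≤ j) from
      fun A => filter_congr (fun a _ => by constructor <;> intro h' <;> [exact h'.2; exact ⟨le_trans h' h, h'⟩]),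
      show ∀ (A : Finset ℕ), A.filter (fun a => (i < a) ∧ a ≤ j) = ∅ from
      fun A => filter_eq_empty_iff.mpr (fun a _ => by omega)]
    rw [union_empty]

lemma swap_filter_gt {p : Finset ℕ × Finset ℕ} (i : ℕ) :
    (swapP i p).1.filter (fun a => i < a) = p.2.filter (fun a => i < a) ∧
    (swapP i p).2.filter (fun a => i < a) = p.1.filter (fun a => i < a) := by
  constructor <;>
  · simp only [swapP, filter_union, filter_filter]
    rw [show ∀ (A : Finset ℕ), A.filter (fun a => (a ≤ i) ∧ i < a) = ∅ from
      fun A => filter_eq_empty_iff.mpr (fun a _ => by omega),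
      show ∀ (A : Finset ℕ), A.filter (fun a => (i < a) ∧ i < a) = A.filter (fun a => i < a) from
      fun A => filter_congr (fun a _ => by tauto)]
    rw [empty_union]

lemma swap_swap (i : ℕ) (p : Finset ℕ × Finset ℕ) : swapP i (swapP i p) = p := by
  have h1 := (swap_filter_le (p := p) (le_refl i)).1
  have h2 := (swap_filter_le (p := p) (le_refl i)).2
  have h3 := (swap_filter_gt (p := p) i).1
  have h4 := (swap_filter_gt (p := p) i).2
  rw [Prod.ext_iff]
  constructor
  · show (swapP i p).1.filter (· ≤ i) ∪ (swapP i p).2.filter (fun a => i < a) = p.1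
    rw [h1, h4, filter_le_union_gt]
  · show (swapP i p).2.filter (· ≤ i) ∪ (swapP i p).1.filter (fun a => i < a) = p.2
    rw [h2, h3, filter_le_union_gt]

lemma swap_card {p : Finset ℕ × Finset ℕ} {i : ℕ}
    (htouch : (p.2.filter (· ≤ i)).card = (p.1.filter (· ≤ i)).card) :
    (swapP i p).1.card = p.2.card ∧ (swapP i p).2.card = p.1.card := by
  have hd1 : Disjoint (p.1.filter (· ≤ i)) (p.2.filter (fun a => i < a)) := by
    rw [disjoint_left]
    intro a ha hb
    rw [mem_filter] at ha hb
    omega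
  have hd2 : Disjoint (p.2.filter (· ≤ i)) (p.1.filter (fun a => i < a)) := by
    rw [disjoint_left]
    intro a ha hb
    rw [mem_filter] at ha hb
    omega
  constructor
  · show (p.1.filter (· ≤ i) ∪ p.2.filter (fun a => i < a)).card = _
    rw [card_union_of_disjoint hd1, ← htouch, card_filter_le_add_gt]
  · show (p.2.filter (· ≤ i) ∪ p.1.filter (fun a => i < a)).card = _
    rw [card_union_of_disjoint hd2, htouch, card_filter_le_add_gt]

lemma touchIdx_swap {N : ℕ} {p : Finset ℕ × Finset ℕ} {i : ℕ} (hi : i ∈ touchIdx N p)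
    (hmin : ∀ j ∈ touchIdx N p, i ≤ j) :
    i ∈ touchIdx N (swapP i p) ∧ ∀ j ∈ touchIdx N (swapP i p), i ≤ j := by
  rw [touchIdx, mem_filter] at hi
  constructor
  · rw [touchIdx, mem_filter]
    rw [(swap_filter_le (le_refl i)).1, (swap_filter_le (le_refl i)).2]
    exact hi
  · intro j hj
    by_contra hji
    push_neg at hji
    rw [touchIdx, mem_filter] at hj
    rw [(swap_filter_le (p := p) (le_of_lt hji)).1, (swap_filter_le (p := p) (le_of_lt hji)).2] at hj
    have : j ∈ touchIdx N p := by rw [touchIdx, mem_filter]; exact hj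
    exact absurd (hmin j this) (not_le.mpr hji)

end Reflect

section Reflect2
open scoped Classical

noncomputable def SBset (N k : ℕ) : Finset (Finset ℕ × Finset ℕ) :=
  ((Icc 1 N).powersetCard k) ×ˢ ((Icc 2 (N+1)).powersetCard k)

noncomputable def Tset (N k : ℕ) : Finset (Finset ℕ × Finset ℕ) :=
  ((Icc 1 (N+1)).powersetCard k) ×ˢ ((Icc 2 N).powersetCard k)

lemma mem_SBset {N k : ℕ} {p : Finset ℕ × Finset ℕ} :
    p ∈ SBset N k ↔ (p.1 ⊆ Icc 1 N ∧ p.1.card = k) ∧ (p.2 ⊆ Icc 2 (N+1) ∧ p.2.card = k) := by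
  simp [SBset, mem_product, mem_powersetCard]

lemma mem_Tset {N k : ℕ} {p : Finset ℕ × Finset ℕ} :
    p ∈ Tset N k ↔ (p.1 ⊆ Icc 1 (N+1) ∧ p.1.card = k) ∧ (p.2 ⊆ Icc 2 N ∧ p.2.card = k) := by
  simp [Tset, mem_product, mem_powersetCard]

def se : ℕ ↪ ℕ := ⟨fun a => a + 1, fun a b h => by simpa using h⟩

lemma se_filter_le (T : Finset ℕ) (i : ℕ) :
    ((T.map se).filter (· ≤ i)).card = (T.filter (· < i)).card := by
  rw [Finset.filter_map, Finset.card_map]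
  congr 1

lemma card_VNat_eq_noTouch (N k : ℕ) :
    (VNat N k).card = ((SBset N k).filter (fun p => touchIdx N p = ∅)).card := by
  apply Finset.card_bij (fun p _ => (p.1, p.2.map se))
  · rintro ⟨S, T⟩ hp
    simp only [VNat, mem_filter, mem_product, mem_powersetCard] at hp
    obtain ⟨⟨⟨hSsub, hSc⟩, ⟨hTsub, hTc⟩⟩, hcond⟩ := hp
    rw [mem_filter, mem_SBset]
    refine ⟨⟨⟨hSsub, hSc⟩, ⟨?_, by rw [Finset.card_map]; exact hTc⟩⟩, ?_⟩
    · intro b hb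
      rw [mem_map] at hb
      obtain ⟨a, ha, rfl⟩ := hb
      have := hTsub ha
      rw [mem_Icc] at this ⊢
      simp only [se, Function.Embedding.coeFn_mk, DFunLike.coe]
      omega
    · rw [touchIdx, filter_eq_empty_iff]
      intro i hi
      rw [se_filter_le]
      exact Nat.ne_of_lt (hcond i hi)
  · rintro ⟨S, T⟩ _ ⟨S', T'⟩ _ h
    simp only [Prod.mk.injEq] at h
    exact Prod.ext h.1 (Finset.map_injective se h.2)
  · rintro ⟨S, B⟩ hp
    rw [mem_filter, mem_SBset] at hp
    obtain ⟨⟨⟨hSsub, hSc⟩, ⟨hBsub, hBc⟩⟩, hnt⟩ := hp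
    have hkey : ((Icc 1 N).filter (fun a => a + 1 ∈ B)).map se = B := by
      ext b
      rw [mem_map]
      constructor
      · rintro ⟨a, ha, rfl⟩
        rw [mem_filter] at ha
        exact ha.2
      · intro hb
        have := hBsub hb
        rw [mem_Icc] at this
        refine ⟨b - 1, ?_, ?_⟩
        · rw [mem_filter, mem_Icc]
          refine ⟨⟨by omega, by omega⟩, ?_⟩
          rwa [Nat.sub_add_cancel (by omega)]
        · simp only [se, Function.Embedding.coeFn_mk, DFunLike.coe]; omega
    refine ⟨(S, (Icc 1 N).filter (fun a => a + 1 ∈ B)), ?_, ?_⟩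
    · simp only [VNat, mem_filter, mem_product, mem_powersetCard]
      refine ⟨⟨⟨hSsub, hSc⟩, ⟨filter_subset _ _, ?_⟩⟩, ?_⟩
      · rw [← hkey, Finset.card_map] at hBc; exact hBc
      · intro i hi
        have habove : (B.filter (· ≤ i)).card < (S.filter (· ≤ i)).card := by
          apply above_of_noTouch (X := S) (Y := B) (N := N)
          · intro a ha
            have := hBsub ha
            rw [mem_Icc] at this
            omega
          · intro j hj
            rw [touchIdx, filter_eq_empty_iff] at hnt
            exact hnt hj
          · rw [mem_Icc] at hi; exact hi.1
          · rw [mem_Icc] at hi; exact hi.2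
        rw [← hkey, se_filter_le] at habove
        exact habove
    · show (S, _) = (S, B)
      rw [hkey]

lemma mem_touchIdx {N : ℕ} {p : Finset ℕ × Finset ℕ} {i : ℕ} :
    i ∈ touchIdx N p ↔ (1 ≤ i ∧ i ≤ N) ∧
      (p.2.filter (· ≤ i)).card = (p.1.filter (· ≤ i)).card := by
  rw [touchIdx, mem_filter, mem_Icc]

lemma swap_mem_Tset {N k : ℕ} {p : Finset ℕ × Finset ℕ} {i0 : ℕ}
    (hSB : p ∈ SBset N k) (hi0 : i0 ∈ touchIdx N p) : swapP i0 p ∈ Tset N k := by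
  rw [mem_SBset] at hSB
  obtain ⟨⟨hSsub, hSc⟩, ⟨hBsub, hBc⟩⟩ := hSB
  rw [mem_touchIdx] at hi0
  obtain ⟨⟨h1, h2⟩, htouch⟩ := hi0
  have hcards := swap_card htouch
  rw [mem_Tset]
  constructor
  · constructor
    · intro a ha
      rw [show (swapP i0 p).1 = p.1.filter (· ≤ i0) ∪ p.2.filter (fun a => i0 < a) from rfl,
          mem_union, mem_filter, mem_filter] at ha
      rw [mem_Icc]
      rcases ha with ⟨ha, -⟩ | ⟨ha, -⟩
      · have := hSsub ha; rw [mem_Icc] at this; omega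
      · have := hBsub ha; rw [mem_Icc] at this; omega
    · rw [hcards.1, hBc]
  · constructor
    · intro a ha
      rw [show (swapP i0 p).2 = p.2.filter (· ≤ i0) ∪ p.1.filter (fun a => i0 < a) from rfl,
          mem_union, mem_filter, mem_filter] at ha
      rw [mem_Icc]
      rcases ha with ⟨ha, ha2⟩ | ⟨ha, ha2⟩
      · have := hBsub ha; rw [mem_Icc] at this; omega
      · have := hSsub ha; rw [mem_Icc] at this; omega
    · rw [hcards.2, hSc]

lemma swap_mem_SBset {N k : ℕ} {q : Finset ℕ × Finset ℕ} {i0 : ℕ}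
    (hT : q ∈ Tset N k) (hi0 : i0 ∈ touchIdx N q) (hmin : ∀ j ∈ touchIdx N q, i0 ≤ j) :
    swapP i0 q ∈ (SBset N k).filter (fun p => (touchIdx N p).Nonempty) := by
  rw [mem_Tset] at hT
  obtain ⟨⟨hXsub, hXc⟩, ⟨hYsub, hYc⟩⟩ := hT
  have hi0' := hi0
  rw [mem_touchIdx] at hi0'
  obtain ⟨⟨h1, h2⟩, htouch⟩ := hi0'
  have hcards := swap_card htouch
  rw [mem_filter, mem_SBset]
  refine ⟨⟨⟨?_, by rw [hcards.1, hYc]⟩, ⟨?_, by rw [hcards.2, hXc]⟩⟩, ?_⟩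
  · intro a ha
    rw [show (swapP i0 q).1 = q.1.filter (· ≤ i0) ∪ q.2.filter (fun a => i0 < a) from rfl,
        mem_union, mem_filter, mem_filter] at ha
    rw [mem_Icc]
    rcases ha with ⟨ha, ha2⟩ | ⟨ha, ha2⟩
    · have := hXsub ha; rw [mem_Icc] at this; omega
    · have := hYsub ha; rw [mem_Icc] at this; omega
  · intro a ha
    rw [show (swapP i0 q).2 = q.2.filter (· ≤ i0) ∪ q.1.filter (fun a => i0 < a) from rfl,
        mem_union, mem_filter, mem_filter] at ha
    rw [mem_Icc]
    rcases ha with ⟨ha, ha2⟩ | ⟨ha, ha2⟩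
    · have := hYsub ha; rw [mem_Icc] at this; omega
    · have := hXsub ha; rw [mem_Icc] at this; omega
  · exact ⟨_, (touchIdx_swap hi0 hmin).1⟩

lemma swap_swap_min {N : ℕ} {p : Finset ℕ × Finset ℕ} {i0 : ℕ}
    (hi0 : i0 ∈ touchIdx N p) (hmin : ∀ j ∈ touchIdx N p, i0 ≤ j) :
    ∀ (hne2 : (touchIdx N (swapP i0 p)).Nonempty),
      swapP ((touchIdx N (swapP i0 p)).min' hne2) (swapP i0 p) = p := by
  intro hne2
  have hts := touchIdx_swap hi0 hmin
  have heq : (touchIdx N (swapP i0 p)).min' hne2 = i0 := by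
    apply le_antisymm
    · exact Finset.min'_le _ _ hts.1
    · exact Finset.le_min' _ _ _ (fun y hy => hts.2 y hy)
  rw [heq, swap_swap]

lemma card_touch (N k : ℕ) (hk : 1 ≤ k) :
    ((SBset N k).filter (fun p => (touchIdx N p).Nonempty)).card = (Tset N k).card := by
  have tne : ∀ q ∈ Tset N k, (touchIdx N q).Nonempty := by
    intro q hq
    rw [mem_Tset] at hq
    obtain ⟨⟨hXsub, hXc⟩, ⟨hYsub, hYc⟩⟩ := hq
    by_contra hcon
    rw [not_nonempty_iff_eq_empty, touchIdx, filter_eq_empty_iff] at hcon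
    have hN : 2 ≤ N := by
      have : q.2.Nonempty := card_pos.mp (by omega)
      obtain ⟨a, ha⟩ := this
      have := hYsub ha
      rw [mem_Icc] at this
      omega
    have habove := above_of_noTouch (X := q.1) (Y := q.2) (N := N)
      (fun a ha => by have := hYsub ha; rw [mem_Icc] at this; omega)
      (fun i hi => hcon hi) N (by omega) (le_refl N)
    have h1 : q.2.filter (· ≤ N) = q.2 := by
      apply filter_true_of_mem
      intro a ha
      have := hYsub ha; rw [mem_Icc] at this; omega
    have h2 : (q.1.filter (· ≤ N)).card ≤ k := by
      rw [← hXc]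
      exact card_le_card (filter_subset _ _)
    rw [h1, hYc] at habove
    omega
  refine Finset.card_bij' (fun p hp => swapP ((touchIdx N p).min'
      (by rw [mem_filter] at hp; exact hp.2)) p)
    (fun q hq => swapP ((touchIdx N q).min' (tne q hq)) q) ?_ ?_ ?_ ?_
  · intro p hp
    rw [mem_filter] at hp
    exact swap_mem_Tset hp.1 ((touchIdx N p).min'_mem hp.2)
  · intro q hq
    exact swap_mem_SBset hq ((touchIdx N q).min'_mem (tne q hq))
      (fun j hj => (touchIdx N q).min'_le j hj)
  · intro p hp
    rw [mem_filter] at hp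
    exact swap_swap_min ((touchIdx N p).min'_mem hp.2)
      (fun j hj => (touchIdx N p).min'_le j hj) _
  · intro q hq
    exact swap_swap_min ((touchIdx N q).min'_mem (tne q hq))
      (fun j hj => (touchIdx N q).min'_le j hj) _

lemma reflect (N k : ℕ) (hk : 1 ≤ k) :
    N.choose k * N.choose k = (VNat N k).card + (N+1).choose k * (N-1).choose k := by
  have hsplit := Finset.card_filter_add_card_filter_not
    (s := SBset N k) (p := fun p => (touchIdx N p).Nonempty)
  have h1 : (SBset N k).card = N.choose k * N.choose k := by
    rw [SBset, card_product, card_powersetCard, card_powersetCard, Nat.card_Icc, Nat.card_Icc]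
    congr 2 <;> omega
  have h2 : (Tset N k).card = (N+1).choose k * (N-1).choose k := by
    rw [Tset, card_product, card_powersetCard, card_powersetCard, Nat.card_Icc, Nat.card_Icc]
    congr 2 <;> omega
  rw [← h1, ← hsplit, card_touch N k hk, h2]
  have h3 : (SBset N k).filter (fun a => ¬ (fun p => (touchIdx N p).Nonempty) a)
      = (SBset N k).filter (fun p => touchIdx N p = ∅) := by
    apply filter_congr
    intro p _
    simp [not_nonempty_iff_eq_empty]
  rw [h3, ← card_VNat_eq_noTouch]
  ring

end Reflect2

section Final

lemma choose_arith (n k : ℕ) (hk : 1 ≤ k) :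
    n * (n.choose k * n.choose k)
      = n.choose k * n.choose (k - 1) + n * ((n + 1).choose k * (n - 1).choose k) := by
  rcases Nat.lt_or_ge n k with h | h
  · have h1 : n.choose k = 0 := Nat.choose_eq_zero_of_lt h
    have h2 : (n - 1).choose k = 0 := Nat.choose_eq_zero_of_lt (by omega)
    rw [h1, h2]
    ring
  · obtain ⟨d, rfl⟩ : ∃ d, n = k + d := ⟨n - k, by omega⟩
    apply Nat.eq_of_mul_eq_mul_right (show 0 < d + 1 by omega)
    have id1 : (k + d).choose k * k = (k + d).choose (k - 1) * (d + 1) := by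
      have h1 := Nat.choose_succ_right_eq (k + d) (k - 1)
      rw [show k - 1 + 1 = k by omega, show k + d - (k - 1) = d + 1 by omega] at h1
      exact h1
    have id2 : (k + d).choose k * (k + d + 1) = (k + d + 1).choose k * (d + 1) := by
      have h2 := Nat.choose_mul_succ_eq (k + d) k
      rw [show k + d + 1 - k = d + 1 by omega] at h2
      exact h2
    have id3 : (k + d - 1).choose k * (k + d) = (k + d).choose k * d := by
      have h3 := Nat.choose_mul_succ_eq (k + d - 1) k
      rw [show k + d - 1 + 1 = k + d by omega, show k + d - k = d by omega] at h3
      exact h3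
    zify at id1 id2 id3 ⊢
    push_cast at id1 id2 id3 ⊢
    linear_combination (((k + d).choose k : ℤ)) * id1
      + (((k : ℤ) + (d : ℤ)) * (((k + d - 1).choose k : ℕ) : ℤ)) * id2
      - (((k + d).choose k : ℤ) * ((k : ℤ) + (d : ℤ) + 1)) * id3

end Final
end Nara

/-- The number of noncrossing set partitions of `[n]` with exactly `k` blocks equals the
Narayana number `Nar(n,k) = (1/n)·binom(n,k)·binom(n,k−1)` (cleared-denominator form). -/
theorem noncrossing_card_eq_narayana (n k : ℕ) (hk : 1 ≤ k) :
    n * Nat.card {π : Finpartition (Finset.univ : Finset (Fin n)) //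
        Noncrossing π ∧ π.parts.card = k}
      = n.choose k * n.choose (k - 1) := by
  rw [Nara.natCard_eq n k, Nara.card_VFin_eq_VNat n k]
  have hr := Nara.reflect n k hk
  have ha := Nara.choose_arith n k hk
  have hmul : n * ((Nara.VNat n k).card + (n + 1).choose k * (n - 1).choose k)
      = n * (n.choose k * n.choose k) := by rw [← hr]
  rw [Nat.mul_add] at hmul
  omega
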